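/- Let Y have density p_θ*(y) = (1/2)φ(y−θ*) + (1/2)φ(y+θ*) with θ* ≥ 0 and φ the standard normal density. Then f(θ) := E[Y·tanh(θY)] is an increasing, odd, bounded function on ℝ with f(∞) = E|Y| ≤ 1 + θ*. -/

import Mathlib

open MeasureTheory ProbabilityTheory Filter Real Set
open scoped ENNReal NNReal

section TanhLemmas

lemma tanh_eq' (x : ℝ) : Real.tanh x = 1 - 2 / (Real.exp (2*x) + 1) := by
  rw [Real.tanh_eq_sinh_div_cosh, Real.sinh_eq, Real.cosh_eq]
  have h1 : Real.exp x ≠ 0 := (Real.exp_pos x).ne'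
  have h2 : Real.exp (2*x) = Real.exp x * Real.exp x := by rw [← Real.exp_add]; ring_nf
  have h3 : Real.exp (-x) = (Real.exp x)⁻¹ := Real.exp_neg x
  have h4 : Real.exp x + Real.exp (-x) ≠ 0 := by positivity
  have h5 : Real.exp (2*x) + 1 ≠ 0 := by positivity
  rw [h2] at h5 ⊢; rw [h3] at h4 ⊢
  field_simp; ring

lemma strictMono_tanh : StrictMono Real.tanh := by
  intro a b hab
  rw [tanh_eq', tanh_eq']
  have h2 : 0 < Real.exp (2*a) + 1 := by positivity
  have h1 : Real.exp (2*a) + 1 < Real.exp (2*b) + 1 := by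
    have := Real.exp_lt_exp.mpr (by linarith : 2*a < 2*b); linarith
  have : 2 / (Real.exp (2*b) + 1) < 2 / (Real.exp (2*a) + 1) :=
    div_lt_div_of_pos_left (by norm_num) h2 h1
  linarith

lemma abs_tanh_le_one (x : ℝ) : |Real.tanh x| ≤ 1 := by
  rw [abs_le, tanh_eq']
  have h2 : 0 < Real.exp (2*x) + 1 := by positivity
  have hlt : 2 / (Real.exp (2*x) + 1) ≤ 2 := by
    rw [div_le_iff₀ h2]; nlinarith [Real.exp_pos (2*x)]
  have hpos : 0 < 2 / (Real.exp (2*x) + 1) := by positivity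
  constructor <;> linarith

lemma tendsto_tanh_atTop : Tendsto Real.tanh atTop (nhds 1) := by
  have he : Tendsto (fun x : ℝ => Real.exp (2*x) + 1) atTop atTop :=
    (Real.tendsto_exp_atTop.comp (tendsto_id.const_mul_atTop two_pos)).atTop_add tendsto_const_nhds
  have h : Tendsto (fun x : ℝ => 2 / (Real.exp (2*x) + 1)) atTop (nhds 0) :=
    Tendsto.div_atTop tendsto_const_nhds he
  have := (tendsto_const_nhds (x := (1:ℝ)) (f := atTop)).sub h
  rw [sub_zero] at this
  exact this.congr fun x => (tanh_eq' x).symm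

lemma tendsto_tanh_atBot : Tendsto Real.tanh atBot (nhds (-1)) := by
  have : Tendsto (fun x : ℝ => -Real.tanh (-x)) atBot (nhds (-1)) := by
    exact (tendsto_tanh_atTop.comp tendsto_neg_atBot_atTop).neg
  exact this.congr fun x => by rw [Real.tanh_neg, neg_neg]

lemma tendsto_mul_tanh (y : ℝ) :
    Tendsto (fun θ : ℝ => y * Real.tanh (θ * y)) atTop (nhds |y|) := by
  rcases lt_trichotomy y 0 with hy | hy | hy
  · have h1 : Tendsto (fun θ : ℝ => θ * y) atTop atBot := tendsto_id.atTop_mul_const_of_neg hy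
    have := (tendsto_tanh_atBot.comp h1).const_mul y
    simpa [abs_of_neg hy, mul_comm] using this
  · simp [hy]
  · have h1 : Tendsto (fun θ : ℝ => θ * y) atTop atTop := tendsto_id.atTop_mul_const hy
    have := (tendsto_tanh_atTop.comp h1).const_mul y
    simpa [abs_of_pos hy] using this

end TanhLemmas

section GaussianLemmas

lemma pdf01 (x : ℝ) : gaussianPDFReal 0 1 x = (Real.sqrt (2 * Real.pi))⁻¹ * Real.exp (-(1/2) * x^2) := by
  simp only [gaussianPDFReal, NNReal.coe_one, mul_one, sub_zero]
  ring_nf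

lemma integrable_xexp : Integrable (fun x : ℝ => x * Real.exp (-(1/2) * x^2)) :=
  integrable_mul_exp_neg_mul_sq (by norm_num)

lemma integrable_abs_pdf01 : Integrable (fun x : ℝ => |x| * gaussianPDFReal 0 1 x) := by
  have : (fun x : ℝ => |x| * gaussianPDFReal 0 1 x)
      = fun x => (Real.sqrt (2 * Real.pi))⁻¹ * |x * Real.exp (-(1/2) * x^2)| := by
    funext x
    rw [pdf01, abs_mul, abs_of_pos (Real.exp_pos _)]
    ring
  rw [this]
  exact (integrable_xexp.abs.const_mul _)

lemma integrable_abs_std : Integrable (fun y : ℝ => |y|) (gaussianReal 0 1) := by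
  rw [gaussianReal_of_var_ne_zero _ one_ne_zero,
    integrable_withDensity_iff (measurable_gaussianPDF _ _)
      (ae_of_all _ fun x => ENNReal.ofReal_lt_top)]
  refine integrable_abs_pdf01.congr ?_
  filter_upwards with x
  rw [gaussianPDF, ENNReal.toReal_ofReal (gaussianPDFReal_nonneg _ _ _)]

lemma integral_Ioi_xexp : ∫ x in Ioi (0:ℝ), x * Real.exp (-(1/2) * x^2) = 1 := by
  have h : ∀ x ∈ Ioi (0:ℝ), HasDerivAt (fun t : ℝ => -Real.exp (-(1/2) * t^2))
      (x * Real.exp (-(1/2) * x^2)) x := by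
    intro x _
    have h1 : HasDerivAt (fun t : ℝ => -(1/2) * t^2) (-(1/2) * (2*x)) x := by
      simpa using ((hasDerivAt_pow 2 x).const_mul (-(1/2) : ℝ))
    have h2 := ((Real.hasDerivAt_exp _).comp x h1).neg
    exact h2.congr_deriv (by ring)
  have hsq : Tendsto (fun t : ℝ => -(1/2) * t^2) atTop atBot := by
    have : Tendsto (fun t : ℝ => t^2) atTop atTop := tendsto_pow_atTop (by norm_num)
    exact this.const_mul_atTop_of_neg (by norm_num)
  have htend : Tendsto (fun t : ℝ => -Real.exp (-(1/2) * t^2)) atTop (nhds 0) := by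
    rw [show (0:ℝ) = -0 by norm_num]
    exact (Real.tendsto_exp_atBot.comp hsq).neg
  have hc : ContinuousWithinAt (fun t : ℝ => -Real.exp (-(1/2) * t^2)) (Ici 0) 0 :=
    ((Real.continuous_exp.comp (continuous_const.mul (continuous_pow 2))).neg).continuousWithinAt
  have := integral_Ioi_of_hasDerivAt_of_tendsto hc h integrable_xexp.integrableOn htend
  simp at this
  simpa using this

lemma integral_gaussian_pdfmul (μv : ℝ) (g : ℝ → ℝ) :
    ∫ y, g y ∂(gaussianReal μv 1) = ∫ x, g x * gaussianPDFReal μv 1 x := by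
  have wd_eq : (gaussianPDF μv 1)
      = (fun x => ((gaussianPDFReal μv 1 x).toNNReal : ℝ≥0∞)) :=
    funext fun x => by rw [gaussianPDF, ENNReal.ofReal]
  rw [gaussianReal_of_var_ne_zero _ one_ne_zero, wd_eq,
    integral_withDensity_eq_integral_smul
      ((measurable_gaussianPDFReal μv 1).real_toNNReal) g]
  congr 1; funext x
  rw [NNReal.smul_def, smul_eq_mul, Real.coe_toNNReal _ (gaussianPDFReal_nonneg _ _ _)]
  ring

lemma integral_abs_std_le : ∫ y, |y| ∂(gaussianReal 0 1) ≤ 1 := by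
  rw [integral_gaussian_pdfmul]
  have habs : ∫ x : ℝ, |x| * gaussianPDFReal 0 1 x
      = (Real.sqrt (2 * Real.pi))⁻¹ * ∫ x : ℝ, |x| * Real.exp (-(1/2) * x^2) := by
    rw [← integral_const_mul]
    congr 1; funext x; rw [pdf01]; ring
  have hcomp : ∫ x : ℝ, |x| * Real.exp (-(1/2) * x^2) = 2 := by
    have h := integral_comp_abs (f := fun t => t * Real.exp (-(1/2) * t^2))
    rw [integral_Ioi_xexp, mul_one] at h
    simp only [sq_abs] at h
    exact h
  rw [habs, hcomp]
  have h2 : (2:ℝ) ≤ Real.sqrt (2 * Real.pi) := by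
    have h4 : (4:ℝ) ≤ 2 * Real.pi := by nlinarith [Real.pi_gt_three]
    have := Real.sqrt_le_sqrt h4
    rw [show (4:ℝ) = 2^2 by norm_num, Real.sqrt_sq (by norm_num : (0:ℝ) ≤ 2)] at this
    exact this
  have h3 : 0 < Real.sqrt (2 * Real.pi) := by positivity
  rw [inv_mul_le_iff₀ h3]
  linarith

end GaussianLemmas

/-- The symmetric two-component Gaussian mixture `(1/2)N(−s,1) + (1/2)N(s,1)`. -/
noncomputable def mixG (s : ℝ) : Measure ℝ :=
  (1 / 2 : ℝ≥0∞) • gaussianReal (-s) 1 + (1 / 2 : ℝ≥0∞) • gaussianReal s 1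

/-- The population EM map `f(θ) = E[Y·tanh(θY)]`, `Y ∼ mixG s`. -/
noncomputable def emMap (s θ : ℝ) : ℝ := ∫ y, y * Real.tanh (θ * y) ∂(mixG s)

lemma continuous_tanh' : Continuous Real.tanh := by
  have : Continuous fun x : ℝ => Real.sinh x / Real.cosh x :=
    Real.continuous_sinh.div Real.continuous_cosh fun x => (Real.cosh_pos x).ne'
  exact this.congr fun x => (Real.tanh_eq_sinh_div_cosh x).symm

lemma map_shift (μv : ℝ) : (gaussianReal 0 1).map (· + μv) = gaussianReal μv 1 := by
  simpa using gaussianReal_map_add_const (μ := 0) (v := 1) μv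

lemma integrable_shift_iff (μv : ℝ) {f : ℝ → ℝ} :
    Integrable f (gaussianReal μv 1) ↔ Integrable (fun z => f (z + μv)) (gaussianReal 0 1) := by
  rw [← map_shift μv]
  exact (Homeomorph.addRight μv).measurableEmbedding.integrable_map_iff

lemma integral_shift (μv : ℝ) (f : ℝ → ℝ) :
    ∫ y, f y ∂(gaussianReal μv 1) = ∫ z, f (z + μv) ∂(gaussianReal 0 1) := by
  rw [← map_shift μv]
  exact (Homeomorph.addRight μv).measurableEmbedding.integral_map (g := f)

lemma integrable_shifted_abs (μv : ℝ) :
    Integrable (fun z : ℝ => |z + μv|) (gaussianReal 0 1) := by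
  refine Integrable.mono' (integrable_abs_std.add (integrable_const |μv|))
    ((continuous_abs.comp (continuous_id.add continuous_const)).aestronglyMeasurable) ?_
  filter_upwards with z
  rw [Real.norm_eq_abs, abs_abs]
  exact abs_add_le z μv

lemma integrable_abs_gaussian (μv : ℝ) :
    Integrable (fun y : ℝ => |y|) (gaussianReal μv 1) := by
  rw [integrable_shift_iff]
  exact integrable_shifted_abs μv

lemma integral_abs_gaussian_le (μv : ℝ) :
    ∫ y, |y| ∂(gaussianReal μv 1) ≤ 1 + |μv| := by
  rw [integral_shift μv (fun y => |y|)]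
  have h1 : ∫ z, |z + μv| ∂(gaussianReal 0 1) ≤ ∫ z, (|z| + |μv|) ∂(gaussianReal 0 1) :=
    integral_mono (integrable_shifted_abs μv) (integrable_abs_std.add (integrable_const _))
      fun z => abs_add_le z μv
  have h2 : ∫ z, (|z| + |μv|) ∂(gaussianReal 0 1)
      = (∫ z, |z| ∂(gaussianReal 0 1)) + |μv| := by
    rw [integral_add integrable_abs_std (integrable_const _), integral_const]
    simp [measure_univ]
  have := integral_abs_std_le
  calc ∫ z, |z + μv| ∂(gaussianReal 0 1) ≤ _ := h1
    _ = _ := h2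
    _ ≤ 1 + |μv| := by linarith


lemma half_ne_top : (1/2 : ℝ≥0∞) ≠ ⊤ := by norm_num

instance mixG_prob (s : ℝ) : IsProbabilityMeasure (mixG s) := by
  constructor
  simp only [mixG, Measure.add_apply, Measure.smul_apply, measure_univ, smul_eq_mul, mul_one]
  exact ENNReal.add_halves 1 ▸ by norm_num

lemma integrable_mixG {s : ℝ} {f : ℝ → ℝ}
    (h1 : Integrable f (gaussianReal (-s) 1)) (h2 : Integrable f (gaussianReal s 1)) :
    Integrable f (mixG s) :=
  (h1.smul_measure half_ne_top).add_measure (h2.smul_measure half_ne_top)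

lemma integral_mixG (s : ℝ) {f : ℝ → ℝ}
    (h1 : Integrable f (gaussianReal (-s) 1)) (h2 : Integrable f (gaussianReal s 1)) :
    ∫ y, f y ∂(mixG s) = (1/2 : ℝ) * (∫ y, f y ∂(gaussianReal (-s) 1))
      + (1/2 : ℝ) * ∫ y, f y ∂(gaussianReal s 1) := by
  rw [mixG, integral_add_measure (h1.smul_measure half_ne_top) (h2.smul_measure half_ne_top),
    integral_smul_measure, integral_smul_measure]
  norm_num

lemma cont_mul_tanh (θ : ℝ) : Continuous (fun y : ℝ => y * Real.tanh (θ * y)) :=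
  continuous_id.mul (continuous_tanh'.comp (continuous_const.mul continuous_id))

lemma abs_mul_tanh_le (θ y : ℝ) : |y * Real.tanh (θ * y)| ≤ |y| := by
  rw [abs_mul]
  calc |y| * |Real.tanh (θ*y)| ≤ |y| * 1 :=
    mul_le_mul_of_nonneg_left (abs_tanh_le_one _) (abs_nonneg y)
  _ = |y| := mul_one _

lemma integrable_tanh_gauss (μv θ : ℝ) :
    Integrable (fun y : ℝ => y * Real.tanh (θ * y)) (gaussianReal μv 1) := by
  refine (integrable_abs_gaussian μv).mono (cont_mul_tanh θ).aestronglyMeasurable ?_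
  filter_upwards with y
  rw [Real.norm_eq_abs, Real.norm_eq_abs, abs_abs]
  exact abs_mul_tanh_le θ y

lemma integrable_tanh_mix (s θ : ℝ) :
    Integrable (fun y : ℝ => y * Real.tanh (θ * y)) (mixG s) :=
  integrable_mixG (integrable_tanh_gauss _ θ) (integrable_tanh_gauss _ θ)

lemma integrable_abs_mix (s : ℝ) : Integrable (fun y : ℝ => |y|) (mixG s) :=
  integrable_mixG (integrable_abs_gaussian _) (integrable_abs_gaussian _)

lemma mixG_singleton (s : ℝ) : mixG s {0} = 0 := by
  have h1 : gaussianReal (-s) 1 {0} = 0 :=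
    (gaussianReal_absolutelyContinuous (-s) one_ne_zero) Real.volume_singleton
  have h2 : gaussianReal s 1 {0} = 0 :=
    (gaussianReal_absolutelyContinuous s one_ne_zero) Real.volume_singleton
  simp [mixG, Measure.add_apply, Measure.smul_apply, h1, h2]

lemma mul_tanh_lt {θ1 θ2 y : ℝ} (h : θ1 < θ2) (hy : y ≠ 0) :
    y * Real.tanh (θ1 * y) < y * Real.tanh (θ2 * y) := by
  rcases lt_or_gt_of_ne hy with hy | hy
  · have : θ2 * y < θ1 * y := by nlinarith
    have ht := strictMono_tanh this
    nlinarith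
  · have : θ1 * y < θ2 * y := by nlinarith
    have ht := strictMono_tanh this
    nlinarith

/-- `f(θ) = E[Y·tanh(θY)]` is increasing, odd and bounded, with
`f(∞) = E|Y| ≤ 1 + θ*`. -/
theorem stmt_3 (s : ℝ) (hs : 0 ≤ s) :
    StrictMono (emMap s) ∧
    (∀ θ : ℝ, emMap s (-θ) = -(emMap s θ)) ∧
    (∀ θ : ℝ, |emMap s θ| ≤ ∫ y, |y| ∂(mixG s)) ∧
    Filter.Tendsto (emMap s) Filter.atTop (nhds (∫ y, |y| ∂(mixG s))) ∧
    (∫ y, |y| ∂(mixG s)) ≤ 1 + s := by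
  refine ⟨?_, ?_, ?_, ?_, ?_⟩
  · -- StrictMono
    intro θ1 θ2 h
    have key : 0 < ∫ y, (y * Real.tanh (θ2 * y) - y * Real.tanh (θ1 * y)) ∂(mixG s) := by
      rw [integral_pos_iff_support_of_nonneg_ae]
      · -- measure of support positive
        have hsub : ({0}ᶜ : Set ℝ) ⊆ Function.support
            (fun y => y * Real.tanh (θ2 * y) - y * Real.tanh (θ1 * y)) := by
          intro y hy
          exact sub_ne_zero.mpr (ne_of_gt (mul_tanh_lt h hy))
        have hc : mixG s ({0}ᶜ : Set ℝ) = 1 := by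
          rw [prob_compl_eq_one_sub (measurableSet_singleton 0), mixG_singleton, tsub_zero]
        calc (0:ℝ≥0∞) < 1 := by norm_num
          _ = mixG s ({0}ᶜ : Set ℝ) := hc.symm
          _ ≤ _ := measure_mono hsub
      · filter_upwards with y
        rcases eq_or_ne y 0 with rfl | hy
        · simp
        · exact le_of_lt (sub_pos.mpr (mul_tanh_lt h hy))
      · exact (integrable_tanh_mix s θ2).sub (integrable_tanh_mix s θ1)
    have := integral_sub (integrable_tanh_mix s θ2) (integrable_tanh_mix s θ1)
    rw [this] at key
    have : emMap s θ1 < emMap s θ2 := by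
      rw [emMap, emMap]; linarith
    exact this
  · -- odd
    intro θ
    rw [emMap, emMap, ← integral_neg]
    congr 1
    funext y
    rw [neg_mul, Real.tanh_neg]
    ring
  · -- bounded
    intro θ
    rw [emMap]
    calc |∫ y, y * Real.tanh (θ * y) ∂(mixG s)| ≤ ∫ y, |y * Real.tanh (θ * y)| ∂(mixG s) :=
        (Real.norm_eq_abs _ ▸ norm_integral_le_integral_norm (fun y : ℝ => y * Real.tanh (θ * y)) :
          |∫ y, y * Real.tanh (θ * y) ∂(mixG s)| ≤ ∫ y, ‖y * Real.tanh (θ * y)‖ ∂(mixG s))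
      _ ≤ ∫ y, |y| ∂(mixG s) :=
        integral_mono (integrable_tanh_mix s θ).abs (integrable_abs_mix s)
          fun y => abs_mul_tanh_le θ y
  · -- tendsto
    exact tendsto_integral_filter_of_dominated_convergence (fun y => |y|)
      (Eventually.of_forall fun θ => (cont_mul_tanh θ).aestronglyMeasurable)
      (Eventually.of_forall fun θ => ae_of_all _ fun y => by
        rw [Real.norm_eq_abs]; exact abs_mul_tanh_le θ y)
      (integrable_abs_mix s)
      (ae_of_all _ fun y => tendsto_mul_tanh y)
  · -- bound 1 + s
    rw [integral_mixG s (integrable_abs_gaussian _) (integrable_abs_gaussian _)]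
    have h1 := integral_abs_gaussian_le (-s)
    have h2 := integral_abs_gaussian_le s
    rw [abs_neg, abs_of_nonneg hs] at h1
    rw [abs_of_nonneg hs] at h2
    linarith
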